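/- If d ≥ 3, then all Gram coefficients b_{ij} are nonzero and the rescaled operators G^(1)_{[ij][kl]} := b_{ij}^{−1} Ĝ^(1)_{[ij][kl]} satisfy the pure matrix-unit multiplication rule: for all a,b,i,j,k,l,p,q ∈ {S,A}, G^(1)_{[ab][ij]} G^(1)_{[kl][pq]} = δ_{ik} δ_{jl} G^(1)_{[ab][pq]}. -/

import Mathlib

open Matrix Kronecker

namespace WBA

/-- Configurations of `p` qudits of local dimension `d`. -/
abbrev Conf (d p : ℕ) := Fin p → Fin d

/-- Operators on `H = (ℂ^d)^{⊗ 2p}`, indexed by pairs (unprimed configuration, primed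
configuration). -/
abbrev Op (d p : ℕ) := Matrix (Conf d p × Conf d p) (Conf d p × Conf d p) ℂ

/-- The projector `P⁺_{a,c'}` onto the maximally entangled state between unprimed system `a`
and primed system `c`, tensored with the identity elsewhere. -/
noncomputable def Pplus (d p : ℕ) (a c : Fin p) : Op d p :=
  Matrix.of fun xy uv =>
    if xy.1 a = xy.2 c ∧ uv.1 a = uv.2 c ∧ (∀ j, j ≠ a → xy.1 j = uv.1 j) ∧
        (∀ j, j ≠ c → xy.2 j = uv.2 j) then
      (d : ℂ)⁻¹
    else 0

/-- `d • P⁺_{a,c'}`, i.e. the partially transposed swap `V^{t_{c'}}_{(a,c')}`. -/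
noncomputable def arc (d p : ℕ) (a c : Fin p) : Op d p := (d : ℂ) • Pplus d p a c

/-- `V^(k) = ∏_{j=p-k+1}^{p} (d • P⁺_{j,j'})` (product over the last `k` systems;
`V^(0) = 1`). -/
noncomputable def Vop (d p k : ℕ) : Op d p :=
  (((List.range p).filter (fun j => decide (p - k ≤ j))).map
    (fun j => if h : j < p then arc d p ⟨j, h⟩ ⟨j, h⟩ else 1)).prod

/-- `Q^(p) = d^{-p} V^(p)` and `Q^(k) = d^{-k} V^(k) - d^{-(k+1)} V^(k+1)` for `k < p`. -/
noncomputable def Qop (d p k : ℕ) : Op d p :=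
  if k = p then ((d : ℂ) ^ p)⁻¹ • Vop d p p
  else ((d : ℂ) ^ k)⁻¹ • Vop d p k - ((d : ℂ) ^ (k + 1))⁻¹ • Vop d p (k + 1)

/-- Permutation matrix on `(ℂ^d)^{⊗ n}`: sends `e_v` to `e_{v ∘ σ⁻¹}`. -/
noncomputable def permMat (d n : ℕ) (σ : Equiv.Perm (Fin n)) :
    Matrix (Fin n → Fin d) (Fin n → Fin d) ℂ :=
  Matrix.of fun x u => if x = u ∘ ⇑σ⁻¹ then 1 else 0

/-- `V_σ`: permutation of the unprimed factors, identity on the primed factors. -/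
noncomputable def VL (d p : ℕ) (σ : Equiv.Perm (Fin p)) : Op d p :=
  (permMat d p σ) ⊗ₖ (1 : Matrix (Conf d p) (Conf d p) ℂ)

/-- `V'_τ`: permutation of the primed factors, identity on the unprimed factors. -/
noncomputable def VR (d p : ℕ) (τ : Equiv.Perm (Fin p)) : Op d p :=
  (1 : Matrix (Conf d p) (Conf d p) ℂ) ⊗ₖ (permMat d p τ)

/-- Identification of `H` with `(ℂ^d)^{⊗ (p+p)}`. -/
def glue (d p : ℕ) : (Conf d p × Conf d p) ≃ (Fin (p + p) → Fin d) :=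
  (Equiv.sumArrowEquivProdArrow (Fin p) (Fin p) (Fin d)).symm.trans
    (Equiv.arrowCongr finSumFinEquiv (Equiv.refl (Fin d)))

/-- The permutation operator `W_π`, `π ∈ S_{2p}`, permuting all `2p` tensor factors of `H`. -/
noncomputable def Wfull (d p : ℕ) (π : Equiv.Perm (Fin (p + p))) : Op d p :=
  (permMat d (p + p) π).submatrix (glue d p) (glue d p)

/-- Partial transpose over the `p` primed factors:
`⟨x,y|M^Γ|u,v⟩ = ⟨x,v|M|u,y⟩`. -/
noncomputable def ptrans (d p : ℕ) (M : Op d p) : Op d p :=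
  Matrix.of fun xy uv => M (xy.1, uv.2) (uv.1, xy.2)

/-- The algebra `A^d_{p,p}` of partially transposed permutation operators, as a
linear subspace of `End(H)`. -/
noncomputable def Apt (d p : ℕ) : Submodule ℂ (Op d p) :=
  Submodule.span ℂ {M | ∃ π : Equiv.Perm (Fin (p + p)), M = ptrans d p (Wfull d p π)}

/-- Extension of an operator on systems `1,…,p-r,1',…,(p-r)'` by the identity on the
remaining systems. -/
noncomputable def embed (d p r : ℕ) (M : Op d (p - r)) : Op d p :=
  Matrix.of fun xy uv =>
    M (xy.1 ∘ Fin.castLE (Nat.sub_le p r), xy.2 ∘ Fin.castLE (Nat.sub_le p r))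
      (uv.1 ∘ Fin.castLE (Nat.sub_le p r), uv.2 ∘ Fin.castLE (Nat.sub_le p r)) *
    (if ∀ j : Fin p, p - r ≤ (j : ℕ) → xy.1 j = uv.1 j ∧ xy.2 j = uv.2 j then 1 else 0)

/-- The ideal `M̃^(k) = span{ V_σ V'_τ Q^(k) V_π V'_ρ }` of `A^d_{p,p}`. -/
noncomputable def Mtil (d p k : ℕ) : Submodule ℂ (Op d p) :=
  Submodule.span ℂ {M | ∃ σ τ π ρ : Equiv.Perm (Fin p),
    M = VL d p σ * VR d p τ * Qop d p k * (VL d p π * VR d p ρ)}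

/-- Labels for the two irreps of `S_2`: symmetric `S` and antisymmetric `A`. -/
inductive SA
  | S
  | A
deriving DecidableEq

instance : Fintype SA := ⟨{SA.S, SA.A}, fun x => by cases x <;> simp⟩

/-- The swap operator on `ℂ^d ⊗ ℂ^d`. -/
noncomputable def Fsw (d : ℕ) : Matrix (Conf d 2) (Conf d 2) ℂ :=
  Matrix.of fun x u => if x 0 = u 1 ∧ x 1 = u 0 then 1 else 0

/-- Symmetric and antisymmetric projectors on `ℂ^d ⊗ ℂ^d`. -/
noncomputable def Esm (d : ℕ) : SA → Matrix (Conf d 2) (Conf d 2) ℂ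
  | SA.S => (2 : ℂ)⁻¹ • (1 + Fsw d)
  | SA.A => (2 : ℂ)⁻¹ • (1 - Fsw d)

/-- `E_i ⊗ E_j` on `H = (ℂ^d)^{⊗4}`. -/
noncomputable def EE (d : ℕ) (i j : SA) : Op d 2 := (Esm d i) ⊗ₖ (Esm d j)

/-- `E_i ⊗ 1` on `H = (ℂ^d)^{⊗4}`. -/
noncomputable def EId (d : ℕ) (i : SA) : Op d 2 :=
  (Esm d i) ⊗ₖ (1 : Matrix (Conf d 2) (Conf d 2) ℂ)

/-- Multiplicities `m_S = d(d+1)/2`, `m_A = d(d-1)/2` (real valued). -/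
noncomputable def mR (d : ℕ) : SA → ℝ
  | SA.S => (d : ℝ) * ((d : ℝ) + 1) / 2
  | SA.A => (d : ℝ) * ((d : ℝ) - 1) / 2

/-- Multiplicities `m_S = d(d+1)/2`, `m_A = d(d-1)/2` (complex valued). -/
noncomputable def mC (d : ℕ) : SA → ℂ
  | SA.S => (d : ℂ) * ((d : ℂ) + 1) / 2
  | SA.A => (d : ℂ) * ((d : ℂ) - 1) / 2

/-- `V^(1) = d • P⁺_{2,2'}` for `p = 2`. -/
noncomputable def V1 (d : ℕ) : Op d 2 := arc d 2 1 1

/-- `V^(2) = d² • P⁺_{2,2'} P⁺_{1,1'}` for `p = 2`. -/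
noncomputable def V2 (d : ℕ) : Op d 2 := arc d 2 1 1 * arc d 2 0 0

/-- `Q^(2) = d^{-2} V^(2)` for `p = 2`. -/
noncomputable def Q2 (d : ℕ) : Op d 2 := ((d : ℂ) ^ 2)⁻¹ • V2 d

/-- `Q^(1) = d^{-1} V^(1) - d^{-2} V^(2)` for `p = 2`. -/
noncomputable def Q1 (d : ℕ) : Op d 2 :=
  (d : ℂ)⁻¹ • V1 d - ((d : ℂ) ^ 2)⁻¹ • V2 d

/-- `G^(2)_{kl} = (d²/√(m_k m_l)) (E_k ⊗ 1) Q^(2) (E_l ⊗ 1)`. -/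
noncomputable def G2 (d : ℕ) (k l : SA) : Op d 2 :=
  ((d : ℂ) ^ 2 / ((Real.sqrt (mR d k * mR d l) : ℝ) : ℂ)) • (EId d k * Q2 d * EId d l)

/-- `G^(2) = G^(2)_{SS} + G^(2)_{AA}`. -/
noncomputable def G2sum (d : ℕ) : Op d 2 := G2 d SA.S SA.S + G2 d SA.A SA.A

/-- The Gram coefficients `b_{SS} = (d+2)/(4d)`, `b_{SA} = b_{AS} = 1/4`,
`b_{AA} = (d-2)/(4d)`. -/
noncomputable def bc (d : ℕ) : SA → SA → ℂ
  | SA.S, SA.S => ((d : ℂ) + 2) / (4 * (d : ℂ))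
  | SA.S, SA.A => 1 / 4
  | SA.A, SA.S => 1 / 4
  | SA.A, SA.A => ((d : ℂ) - 2) / (4 * (d : ℂ))

/-- `Ĝ^(1)_{[ij][kl]} = (E_i ⊗ E_j) Q^(1) (E_k ⊗ E_l)`. -/
noncomputable def Ghat1 (d : ℕ) (i j k l : SA) : Op d 2 :=
  EE d i j * Q1 d * EE d k l

/-- `G^(1)_{[ij][kl]} = b_{ij}⁻¹ Ĝ^(1)_{[ij][kl]}`. -/
noncomputable def G1 (d : ℕ) (i j k l : SA) : Op d 2 := (bc d i j)⁻¹ • Ghat1 d i j k l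

/-- `G^(1) = Σ_{ij} G^(1)_{[ij][ij]}`. -/
noncomputable def G1sum (d : ℕ) : Op d 2 := ∑ i : SA, ∑ j : SA, G1 d i j i j

/-- `G^(0)_{ij} = E_i⊗E_j - b_{ij}⁻¹ (E_i⊗E_j)Q^(1)(E_i⊗E_j)
- δ_{ij} (d²/m_i) (E_i⊗1)Q^(2)(E_i⊗1)`. -/
noncomputable def G0 (d : ℕ) (i j : SA) : Op d 2 :=
  EE d i j - (bc d i j)⁻¹ • (EE d i j * Q1 d * EE d i j) -
    (if i = j then (d : ℂ) ^ 2 / mC d i else 0) • (EId d i * Q2 d * EId d i)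

-- ===== auxiliary development =====

noncomputable def M1 (d : ℕ) : Op d 2 := Matrix.of fun xy uv =>
  if xy.1 1 = xy.2 1 ∧ uv.1 1 = uv.2 1 ∧ xy.1 0 = uv.1 0 ∧ xy.2 0 = uv.2 0 then 1 else 0
noncomputable def M0 (d : ℕ) : Op d 2 := Matrix.of fun xy uv =>
  if xy.1 0 = xy.2 0 ∧ uv.1 0 = uv.2 0 ∧ xy.1 1 = uv.1 1 ∧ xy.2 1 = uv.2 1 then 1 else 0
noncomputable def M2 (d : ℕ) : Op d 2 := Matrix.of fun xy uv =>
  if xy.1 0 = xy.2 0 ∧ xy.1 1 = xy.2 1 ∧ uv.1 0 = uv.2 0 ∧ uv.1 1 = uv.2 1 then 1 else 0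
noncomputable def MX (d : ℕ) : Op d 2 := Matrix.of fun xy uv =>
  if xy.1 0 = uv.1 1 ∧ xy.1 1 = uv.1 0 ∧ xy.2 0 = uv.2 0 ∧ xy.2 1 = uv.2 1 then 1 else 0
noncomputable def MY (d : ℕ) : Op d 2 := Matrix.of fun xy uv =>
  if xy.1 0 = uv.1 0 ∧ xy.1 1 = uv.1 1 ∧ xy.2 0 = uv.2 1 ∧ xy.2 1 = uv.2 0 then 1 else 0
noncomputable def MZ (d : ℕ) : Op d 2 := Matrix.of fun xy uv =>
  if xy.1 0 = uv.1 1 ∧ xy.1 1 = uv.1 0 ∧ xy.2 0 = uv.2 1 ∧ xy.2 1 = uv.2 0 then 1 else 0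
noncomputable def A1 (d : ℕ) : Op d 2 := Matrix.of fun xy uv =>
  if xy.1 1 = xy.2 1 ∧ xy.1 0 = uv.1 1 ∧ uv.1 0 = uv.2 1 ∧ xy.2 0 = uv.2 0 then 1 else 0
noncomputable def A2 (d : ℕ) : Op d 2 := Matrix.of fun xy uv =>
  if xy.1 1 = xy.2 1 ∧ uv.1 1 = uv.2 0 ∧ xy.1 0 = uv.1 0 ∧ xy.2 0 = uv.2 1 then 1 else 0
noncomputable def A3 (d : ℕ) : Op d 2 := Matrix.of fun xy uv =>
  if xy.1 1 = xy.2 1 ∧ xy.1 0 = uv.1 1 ∧ uv.1 0 = uv.2 0 ∧ xy.2 0 = uv.2 1 then 1 else 0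
noncomputable def CC (d : ℕ) : Op d 2 := Matrix.of fun xy uv =>
  if xy.1 0 = xy.2 0 ∧ xy.1 1 = xy.2 1 ∧ uv.1 1 = uv.2 0 ∧ uv.1 0 = uv.2 1 then 1 else 0

noncomputable def eps : SA → ℂ
  | SA.S => 1
  | SA.A => -1

lemma sum_fiber {β α : Type*} [Fintype α] [Fintype β] [DecidableEq α] (g : β → α)
    (hg : Function.Injective g) (f : α → ℂ) (h0 : ∀ a, (∀ b, g b ≠ a) → f a = 0) :
    ∑ a, f a = ∑ b, f (g b) := by
  rw [← Finset.sum_image (g := g) (f := f) (fun x _ y _ h => hg h)]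
  refine (Finset.sum_subset (Finset.subset_univ _) ?_).symm
  intro a _ ha
  exact h0 a fun b hb => ha (Finset.mem_image.mpr ⟨b, Finset.mem_univ b, hb⟩)

section aux
variable (d : ℕ)

lemma mul_M1_M1 : M1 d * M1 d = (d:ℂ) • M1 d := by
  ext ⟨x,y⟩ ⟨u,v⟩
  rw [mul_apply, sum_fiber (fun a : Fin d => ((![x 0, a], ![y 0, a]) : Conf d 2 × Conf d 2))
    (fun a b h => by simpa using congrFun (congrArg Prod.fst h) 1)]
  · simp only [M1, of_apply, Matrix.cons_val_zero, Matrix.cons_val_one, Matrix.head_cons,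
      Matrix.smul_apply, smul_eq_mul]
    simp [Finset.sum_const, Finset.card_univ, mul_ite, ite_mul, Finset.mul_sum]
    split_ifs <;> simp_all
  · intro ⟨w,z⟩ hall
    simp only [M1, of_apply]
    split_ifs with h1 h2 <;> try simp
    refine absurd ?_ (hall (w 1))
    obtain ⟨e1,e2,e3,e4⟩ := h1; obtain ⟨f1,f2,f3,f4⟩ := h2
    rw [Prod.ext_iff]
    constructor <;> funext j <;> fin_cases j <;> simp_all

lemma mul_M1_M0 : M1 d * M0 d = M2 d := by
  ext ⟨x,y⟩ ⟨u,v⟩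
  rw [mul_apply, Fintype.sum_eq_single ((![x 0, u 1], ![y 0, u 1]) : Conf d 2 × Conf d 2)]
  · simp only [M1, M0, M2, of_apply, Matrix.cons_val_zero, Matrix.cons_val_one, Matrix.head_cons]
    simp only [ite_mul, mul_ite, one_mul, mul_one, zero_mul, mul_zero]
    split_ifs <;> simp_all
  · intro ⟨w,z⟩ hne
    simp only [M1, M0, of_apply]
    split_ifs with h1 h2 <;> try simp
    refine absurd ?_ hne
    obtain ⟨e1,e2,e3,e4⟩ := h1; obtain ⟨f1,f2,f3,f4⟩ := h2
    rw [Prod.ext_iff]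
    constructor <;> funext j <;> fin_cases j <;> simp_all

lemma mul_M1_M2 : M1 d * M2 d = (d:ℂ) • M2 d := by
  ext ⟨x,y⟩ ⟨u,v⟩
  rw [mul_apply, sum_fiber (fun a : Fin d => ((![x 0, a], ![y 0, a]) : Conf d 2 × Conf d 2))
    (fun a b h => by simpa using congrFun (congrArg Prod.fst h) 1)]
  · simp only [M1, M2, of_apply, Matrix.cons_val_zero, Matrix.cons_val_one, Matrix.head_cons,
      Matrix.smul_apply, smul_eq_mul]
    simp [Finset.sum_const, Finset.card_univ, mul_ite, ite_mul, Finset.mul_sum]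
    split_ifs <;> simp_all
  · intro ⟨w,z⟩ hall
    simp only [M1, M2, of_apply]
    split_ifs with h1 h2 <;> try simp
    refine absurd ?_ (hall (w 1))
    obtain ⟨e1,e2,e3,e4⟩ := h1; obtain ⟨f1,f2,f3,f4⟩ := h2
    rw [Prod.ext_iff]
    constructor <;> funext j <;> fin_cases j <;> simp_all

lemma mul_M2_M1 : M2 d * M1 d = (d:ℂ) • M2 d := by
  ext ⟨x,y⟩ ⟨u,v⟩
  rw [mul_apply, sum_fiber (fun a : Fin d => ((![u 0, a], ![u 0, a]) : Conf d 2 × Conf d 2))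
    (fun a b h => by simpa using congrFun (congrArg Prod.fst h) 1)]
  · simp only [M1, M2, of_apply, Matrix.cons_val_zero, Matrix.cons_val_one, Matrix.head_cons,
      Matrix.smul_apply, smul_eq_mul]
    simp [Finset.sum_const, Finset.card_univ, mul_ite, ite_mul, Finset.mul_sum]
    split_ifs <;> simp_all
  · intro ⟨w,z⟩ hall
    simp only [M1, M2, of_apply]
    split_ifs with h1 h2 <;> try simp
    refine absurd ?_ (hall (w 1))
    obtain ⟨e1,e2,e3,e4⟩ := h1; obtain ⟨f1,f2,f3,f4⟩ := h2
    rw [Prod.ext_iff]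
    constructor <;> funext j <;> fin_cases j <;> simp_all

lemma mul_M2_M2 : M2 d * M2 d = ((d:ℂ)^2) • M2 d := by
  ext ⟨x,y⟩ ⟨u,v⟩
  rw [mul_apply, sum_fiber (fun a : Fin d × Fin d =>
      ((![a.1, a.2], ![a.1, a.2]) : Conf d 2 × Conf d 2))
    (fun a b h => by
      have h0 := congrFun (congrArg Prod.fst h) 0
      have h1 := congrFun (congrArg Prod.fst h) 1
      simp at h0 h1
      exact Prod.ext h0 h1)]
  · simp only [M2, of_apply, Matrix.cons_val_zero, Matrix.cons_val_one, Matrix.head_cons,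
      Matrix.smul_apply, smul_eq_mul]
    simp [Finset.sum_const, Finset.card_univ, mul_ite, ite_mul, Finset.mul_sum, sq]
    split_ifs <;> simp_all <;> ring
  · intro ⟨w,z⟩ hall
    simp only [M2, of_apply]
    split_ifs with h1 h2 <;> try simp
    refine absurd ?_ (hall (w 0, w 1))
    obtain ⟨e1,e2,e3,e4⟩ := h1; obtain ⟨f1,f2,f3,f4⟩ := h2
    rw [Prod.ext_iff]
    constructor <;> funext j <;> fin_cases j <;> simp_all


lemma mul_M1_MX : M1 d * MX d = A1 d := by
  ext ⟨x,y⟩ ⟨u,v⟩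
  rw [mul_apply, Fintype.sum_eq_single ((![x 0, v 1], v) : Conf d 2 × Conf d 2)]
  · simp only [M1, MX, A1, of_apply, Matrix.cons_val_zero, Matrix.cons_val_one, Matrix.head_cons]
    simp only [ite_mul, mul_ite, one_mul, mul_one, zero_mul, mul_zero]
    split_ifs <;> simp_all
  · intro ⟨w,z⟩ hne
    simp only [M1, MX, of_apply]
    split_ifs with h1 h2 <;> try simp
    refine absurd ?_ hne
    obtain ⟨e1,e2,e3,e4⟩ := h1; obtain ⟨f1,f2,f3,f4⟩ := h2
    rw [Prod.ext_iff]
    constructor <;> funext j <;> fin_cases j <;> simp_all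

lemma mul_M1_MY : M1 d * MY d = A2 d := by
  ext ⟨x,y⟩ ⟨u,v⟩
  rw [mul_apply, Fintype.sum_eq_single ((u, ![y 0, u 1]) : Conf d 2 × Conf d 2)]
  · simp only [M1, MY, A2, of_apply, Matrix.cons_val_zero, Matrix.cons_val_one, Matrix.head_cons]
    simp only [ite_mul, mul_ite, one_mul, mul_one, zero_mul, mul_zero]
    split_ifs <;> simp_all
  · intro ⟨w,z⟩ hne
    simp only [M1, MY, of_apply]
    split_ifs with h1 h2 <;> try simp
    refine absurd ?_ hne
    obtain ⟨e1,e2,e3,e4⟩ := h1; obtain ⟨f1,f2,f3,f4⟩ := h2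
    rw [Prod.ext_iff]
    constructor <;> funext j <;> fin_cases j <;> simp_all

lemma mul_M1_MZ : M1 d * MZ d = A3 d := by
  ext ⟨x,y⟩ ⟨u,v⟩
  rw [mul_apply, Fintype.sum_eq_single ((![x 0, u 0], ![y 0, u 0]) : Conf d 2 × Conf d 2)]
  · simp only [M1, MZ, A3, of_apply, Matrix.cons_val_zero, Matrix.cons_val_one, Matrix.head_cons]
    simp only [ite_mul, mul_ite, one_mul, mul_one, zero_mul, mul_zero]
    split_ifs <;> simp_all
  · intro ⟨w,z⟩ hne
    simp only [M1, MZ, of_apply]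
    split_ifs with h1 h2 <;> try simp
    refine absurd ?_ hne
    obtain ⟨e1,e2,e3,e4⟩ := h1; obtain ⟨f1,f2,f3,f4⟩ := h2
    rw [Prod.ext_iff]
    constructor <;> funext j <;> fin_cases j <;> simp_all

lemma mul_A1_M1 : A1 d * M1 d = M1 d := by
  ext ⟨x,y⟩ ⟨u,v⟩
  rw [mul_apply, Fintype.sum_eq_single ((![x 0, x 0], ![y 0, x 0]) : Conf d 2 × Conf d 2)]
  · simp only [M1, A1, of_apply, Matrix.cons_val_zero, Matrix.cons_val_one, Matrix.head_cons]
    simp only [ite_mul, mul_ite, one_mul, mul_one, zero_mul, mul_zero]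
    split_ifs <;> simp_all
  · intro ⟨w,z⟩ hne
    simp only [M1, A1, of_apply]
    split_ifs with h1 h2 <;> try simp
    refine absurd ?_ hne
    obtain ⟨e1,e2,e3,e4⟩ := h1; obtain ⟨f1,f2,f3,f4⟩ := h2
    rw [Prod.ext_iff]
    constructor <;> funext j <;> fin_cases j <;> simp_all

lemma mul_A1_M2 : A1 d * M2 d = M2 d := by
  ext ⟨x,y⟩ ⟨u,v⟩
  rw [mul_apply, Fintype.sum_eq_single ((![x 0, x 0], ![x 0, x 0]) : Conf d 2 × Conf d 2)]
  · simp only [M2, A1, of_apply, Matrix.cons_val_zero, Matrix.cons_val_one, Matrix.head_cons]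
    simp only [ite_mul, mul_ite, one_mul, mul_one, zero_mul, mul_zero]
    split_ifs <;> simp_all
  · intro ⟨w,z⟩ hne
    simp only [M2, A1, of_apply]
    split_ifs with h1 h2 <;> try simp
    refine absurd ?_ hne
    obtain ⟨e1,e2,e3,e4⟩ := h1; obtain ⟨f1,f2,f3,f4⟩ := h2
    rw [Prod.ext_iff]
    constructor <;> funext j <;> fin_cases j <;> simp_all

lemma mul_A2_M1 : A2 d * M1 d = M1 d := by
  ext ⟨x,y⟩ ⟨u,v⟩
  rw [mul_apply, Fintype.sum_eq_single ((![x 0, y 0], ![y 0, y 0]) : Conf d 2 × Conf d 2)]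
  · simp only [M1, A2, of_apply, Matrix.cons_val_zero, Matrix.cons_val_one, Matrix.head_cons]
    simp only [ite_mul, mul_ite, one_mul, mul_one, zero_mul, mul_zero]
    split_ifs <;> simp_all
  · intro ⟨w,z⟩ hne
    simp only [M1, A2, of_apply]
    split_ifs with h1 h2 <;> try simp
    refine absurd ?_ hne
    obtain ⟨e1,e2,e3,e4⟩ := h1; obtain ⟨f1,f2,f3,f4⟩ := h2
    rw [Prod.ext_iff]
    constructor <;> funext j <;> fin_cases j <;> simp_all

lemma mul_A2_M2 : A2 d * M2 d = M2 d := by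
  ext ⟨x,y⟩ ⟨u,v⟩
  rw [mul_apply, Fintype.sum_eq_single ((![x 0, x 0], ![x 0, x 0]) : Conf d 2 × Conf d 2)]
  · simp only [M2, A2, of_apply, Matrix.cons_val_zero, Matrix.cons_val_one, Matrix.head_cons]
    simp only [ite_mul, mul_ite, one_mul, mul_one, zero_mul, mul_zero]
    split_ifs <;> simp_all
  · intro ⟨w,z⟩ hne
    simp only [M2, A2, of_apply]
    split_ifs with h1 h2 <;> try simp
    refine absurd ?_ hne
    obtain ⟨e1,e2,e3,e4⟩ := h1; obtain ⟨f1,f2,f3,f4⟩ := h2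
    rw [Prod.ext_iff]
    constructor <;> funext j <;> fin_cases j <;> simp_all

lemma mul_A3_M1 : A3 d * M1 d = M2 d := by
  ext ⟨x,y⟩ ⟨u,v⟩
  rw [mul_apply, Fintype.sum_eq_single ((![u 0, x 0], ![u 0, x 0]) : Conf d 2 × Conf d 2)]
  · simp only [M1, M2, A3, of_apply, Matrix.cons_val_zero, Matrix.cons_val_one, Matrix.head_cons]
    simp only [ite_mul, mul_ite, one_mul, mul_one, zero_mul, mul_zero]
    split_ifs <;> simp_all
  · intro ⟨w,z⟩ hne
    simp only [M1, A3, of_apply]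
    split_ifs with h1 h2 <;> try simp
    refine absurd ?_ hne
    obtain ⟨e1,e2,e3,e4⟩ := h1; obtain ⟨f1,f2,f3,f4⟩ := h2
    rw [Prod.ext_iff]
    constructor <;> funext j <;> fin_cases j <;> simp_all

lemma mul_A3_M2 : A3 d * M2 d = (d:ℂ) • M2 d := by
  ext ⟨x,y⟩ ⟨u,v⟩
  rw [mul_apply, sum_fiber (fun a : Fin d => ((![a, x 0], ![a, x 0]) : Conf d 2 × Conf d 2))
    (fun a b h => by simpa using congrFun (congrArg Prod.fst h) 0)]
  · simp only [M2, A3, of_apply, Matrix.cons_val_zero, Matrix.cons_val_one, Matrix.head_cons,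
      Matrix.smul_apply, smul_eq_mul]
    simp [Finset.sum_const, Finset.card_univ, mul_ite, ite_mul, Finset.mul_sum]
    split_ifs <;> simp_all
  · intro ⟨w,z⟩ hall
    simp only [M2, A3, of_apply]
    split_ifs with h1 h2 <;> try simp
    refine absurd ?_ (hall (w 0))
    obtain ⟨e1,e2,e3,e4⟩ := h1; obtain ⟨f1,f2,f3,f4⟩ := h2
    rw [Prod.ext_iff]
    constructor <;> funext j <;> fin_cases j <;> simp_all

lemma mul_M2_MX : M2 d * MX d = CC d := by
  ext ⟨x,y⟩ ⟨u,v⟩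
  rw [mul_apply, Fintype.sum_eq_single ((![u 1, u 0], ![u 1, u 0]) : Conf d 2 × Conf d 2)]
  · simp only [M2, MX, CC, of_apply, Matrix.cons_val_zero, Matrix.cons_val_one, Matrix.head_cons]
    simp only [ite_mul, mul_ite, one_mul, mul_one, zero_mul, mul_zero]
    split_ifs <;> simp_all
  · intro ⟨w,z⟩ hne
    simp only [M2, MX, of_apply]
    split_ifs with h1 h2 <;> try simp
    refine absurd ?_ hne
    obtain ⟨e1,e2,e3,e4⟩ := h1; obtain ⟨f1,f2,f3,f4⟩ := h2
    rw [Prod.ext_iff]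
    constructor <;> funext j <;> fin_cases j <;> simp_all

lemma mul_M2_MY : M2 d * MY d = CC d := by
  ext ⟨x,y⟩ ⟨u,v⟩
  rw [mul_apply, Fintype.sum_eq_single ((u, u) : Conf d 2 × Conf d 2)]
  · simp only [M2, MY, CC, of_apply, Matrix.cons_val_zero, Matrix.cons_val_one, Matrix.head_cons]
    simp only [ite_mul, mul_ite, one_mul, mul_one, zero_mul, mul_zero]
    split_ifs <;> simp_all
  · intro ⟨w,z⟩ hne
    simp only [M2, MY, of_apply]
    split_ifs with h1 h2 <;> try simp
    refine absurd ?_ hne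
    obtain ⟨e1,e2,e3,e4⟩ := h1; obtain ⟨f1,f2,f3,f4⟩ := h2
    rw [Prod.ext_iff]
    constructor <;> funext j <;> fin_cases j <;> simp_all

lemma mul_M2_MZ : M2 d * MZ d = M2 d := by
  ext ⟨x,y⟩ ⟨u,v⟩
  rw [mul_apply, Fintype.sum_eq_single ((![u 1, u 0], ![u 1, u 0]) : Conf d 2 × Conf d 2)]
  · simp only [M2, MZ, of_apply, Matrix.cons_val_zero, Matrix.cons_val_one, Matrix.head_cons]
    simp only [ite_mul, mul_ite, one_mul, mul_one, zero_mul, mul_zero]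
    split_ifs <;> simp_all
  · intro ⟨w,z⟩ hne
    simp only [M2, MZ, of_apply]
    split_ifs with h1 h2 <;> try simp
    refine absurd ?_ hne
    obtain ⟨e1,e2,e3,e4⟩ := h1; obtain ⟨f1,f2,f3,f4⟩ := h2
    rw [Prod.ext_iff]
    constructor <;> funext j <;> fin_cases j <;> simp_all

lemma mul_CC_M1 : CC d * M1 d = M2 d := by
  ext ⟨x,y⟩ ⟨u,v⟩
  rw [mul_apply, Fintype.sum_eq_single ((![u 0, u 0], ![u 0, u 0]) : Conf d 2 × Conf d 2)]
  · simp only [M1, M2, CC, of_apply, Matrix.cons_val_zero, Matrix.cons_val_one, Matrix.head_cons]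
    simp only [ite_mul, mul_ite, one_mul, mul_one, zero_mul, mul_zero]
    split_ifs <;> simp_all
  · intro ⟨w,z⟩ hne
    simp only [M1, CC, of_apply]
    split_ifs with h1 h2 <;> try simp
    refine absurd ?_ hne
    obtain ⟨e1,e2,e3,e4⟩ := h1; obtain ⟨f1,f2,f3,f4⟩ := h2
    rw [Prod.ext_iff]
    constructor <;> funext j <;> fin_cases j <;> simp_all

lemma mul_CC_M2 : CC d * M2 d = (d:ℂ) • M2 d := by
  ext ⟨x,y⟩ ⟨u,v⟩
  rw [mul_apply, sum_fiber (fun a : Fin d => ((![a, a], ![a, a]) : Conf d 2 × Conf d 2))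
    (fun a b h => by simpa using congrFun (congrArg Prod.fst h) 0)]
  · simp only [M2, CC, of_apply, Matrix.cons_val_zero, Matrix.cons_val_one, Matrix.head_cons,
      Matrix.smul_apply, smul_eq_mul]
    simp [Finset.sum_const, Finset.card_univ, mul_ite, ite_mul, Finset.mul_sum]
    split_ifs <;> simp_all
  · intro ⟨w,z⟩ hall
    simp only [M2, CC, of_apply]
    split_ifs with h1 h2 <;> try simp
    refine absurd ?_ (hall (w 0))
    obtain ⟨e1,e2,e3,e4⟩ := h1; obtain ⟨f1,f2,f3,f4⟩ := h2
    rw [Prod.ext_iff]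
    constructor <;> funext j <;> fin_cases j <;> simp_all


lemma V1_eq (hd : (d:ℂ) ≠ 0) : V1 d = M1 d := by
  ext ⟨x,y⟩ ⟨u,v⟩
  simp only [V1, arc, Pplus, M1, Matrix.smul_apply, of_apply, smul_eq_mul, Fin.forall_fin_two]
  norm_num
  split_ifs with h1
  · exact mul_inv_cancel₀ hd
  · simp

lemma arc0_eq (hd : (d:ℂ) ≠ 0) : arc d 2 0 0 = M0 d := by
  ext ⟨x,y⟩ ⟨u,v⟩
  simp only [arc, Pplus, M0, Matrix.smul_apply, of_apply, smul_eq_mul, Fin.forall_fin_two]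
  norm_num
  split_ifs with h1
  · exact mul_inv_cancel₀ hd
  · simp

lemma Fsw_mul_Fsw : Fsw d * Fsw d = 1 := by
  ext x u
  rw [mul_apply, Fintype.sum_eq_single (![x 1, x 0] : Conf d 2)]
  · simp only [Fsw, of_apply, Matrix.cons_val_zero, Matrix.cons_val_one, Matrix.head_cons,
      one_apply]
    simp only [ite_mul, mul_ite, one_mul, mul_one, zero_mul, mul_zero]
    split_ifs <;> simp_all [funext_iff, Fin.forall_fin_two] <;>
      simp only [and_comm]
  · intro w hne
    simp only [Fsw, of_apply]
    split_ifs with h1 h2 <;> try simp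
    refine absurd ?_ hne
    obtain ⟨e1,e2⟩ := h1
    funext j <;> fin_cases j <;> simp_all

lemma MX_eq : (Fsw d) ⊗ₖ (1 : Matrix (Conf d 2) (Conf d 2) ℂ) = MX d := by
  ext ⟨x,y⟩ ⟨u,v⟩
  simp only [kroneckerMap_apply, Fsw, of_apply, one_apply, MX]
  simp only [ite_mul, mul_ite, one_mul, mul_one, zero_mul, mul_zero]
  split_ifs <;> simp_all [funext_iff, Fin.forall_fin_two]

lemma MY_eq : (1 : Matrix (Conf d 2) (Conf d 2) ℂ) ⊗ₖ (Fsw d) = MY d := by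
  ext ⟨x,y⟩ ⟨u,v⟩
  simp only [kroneckerMap_apply, Fsw, of_apply, one_apply, MY]
  simp only [ite_mul, mul_ite, one_mul, mul_one, zero_mul, mul_zero]
  split_ifs <;> simp_all [funext_iff, Fin.forall_fin_two]

lemma MZ_eq : (Fsw d) ⊗ₖ (Fsw d) = MZ d := by
  ext ⟨x,y⟩ ⟨u,v⟩
  simp only [kroneckerMap_apply, Fsw, of_apply, MZ]
  simp only [ite_mul, mul_ite, one_mul, mul_one, zero_mul, mul_zero]
  split_ifs <;> simp_all

lemma Esm_eq (i : SA) : Esm d i = (2:ℂ)⁻¹ • (1 + eps i • Fsw d) := by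
  cases i <;> simp [Esm, eps, sub_eq_add_neg]

lemma Esm_mul (i k : SA) : Esm d i * Esm d k = if i = k then Esm d i else 0 := by
  have hF := Fsw_mul_Fsw d
  have e1 : Esm d SA.S * Esm d SA.A = 0 := by
    simp only [Esm, smul_mul_smul_comm, mul_add, add_mul, mul_sub, sub_mul, one_mul, mul_one, hF]
    module
  have e2 : Esm d SA.A * Esm d SA.S = 0 := by
    simp only [Esm, smul_mul_smul_comm, mul_add, add_mul, mul_sub, sub_mul, one_mul, mul_one, hF]
    module
  have e3 : Esm d SA.S * Esm d SA.S = Esm d SA.S := by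
    simp only [Esm, smul_mul_smul_comm, mul_add, add_mul, mul_sub, sub_mul, one_mul, mul_one, hF]
    module
  have e4 : Esm d SA.A * Esm d SA.A = Esm d SA.A := by
    simp only [Esm, smul_mul_smul_comm, mul_add, add_mul, mul_sub, sub_mul, one_mul, mul_one, hF]
    module
  cases i <;> cases k <;> simp [e1, e2, e3, e4]

lemma EE_mul (i j k l : SA) : EE d i j * EE d k l = if i = k ∧ j = l then EE d i j else 0 := by
  rw [EE, EE, ← Matrix.mul_kronecker_mul, Esm_mul, Esm_mul]
  by_cases hik : i = k <;> by_cases hjl : j = l <;>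
    simp [hik, hjl, EE, Matrix.zero_kronecker, Matrix.kronecker_zero]

lemma EE_eq (i j : SA) :
    EE d i j = (4:ℂ)⁻¹ • ((1 : Op d 2) + eps i • MX d + eps j • MY d
      + (eps i * eps j) • MZ d) := by
  rw [EE, Esm_eq, Esm_eq]
  simp only [Matrix.add_kronecker, Matrix.kronecker_add, Matrix.smul_kronecker,
    Matrix.kronecker_smul, Matrix.one_kronecker_one, MX_eq, MY_eq, MZ_eq]
  module



end aux

/-- R is Q1 in M-coordinates. -/
noncomputable def R (d : ℕ) : Op d 2 := (d : ℂ)⁻¹ • M1 d - ((d : ℂ) ^ 2)⁻¹ • M2 d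


section aux2
variable (d : ℕ)

lemma V2_eq (hd : (d:ℂ) ≠ 0) : V2 d = M2 d := by
  rw [V2, show arc d 2 1 1 = M1 d from V1_eq d hd, arc0_eq d hd, mul_M1_M0]

lemma Q1_eq (hd : (d:ℂ) ≠ 0) : Q1 d = R d := by
  rw [Q1, R, V1_eq d hd, V2_eq d hd]

lemma R_mul_R (hd : (d:ℂ) ≠ 0) : R d * R d = R d := by
  simp only [R, sub_mul, mul_sub, smul_mul_assoc, Matrix.mul_smul, mul_M1_M1, mul_M1_M2,
    mul_M2_M1, mul_M2_M2, smul_smul]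
  match_scalars <;> field_simp <;> ring_nf <;>
    first
      | rfl
      | (rw [← mul_pow, mul_inv_cancel₀ hd, one_pow])

lemma R_MX_R (hd : (d:ℂ) ≠ 0) : R d * MX d * R d = (d:ℂ)⁻¹ • R d := by
  have h1 : R d * MX d = (d : ℂ)⁻¹ • A1 d - ((d : ℂ) ^ 2)⁻¹ • CC d := by
    simp only [R, sub_mul, smul_mul_assoc, mul_M1_MX, mul_M2_MX]
  rw [h1]
  simp only [R, sub_mul, mul_sub, smul_mul_assoc, Matrix.mul_smul, mul_A1_M1, mul_A1_M2,
    mul_CC_M1, mul_CC_M2, smul_smul, smul_sub]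
  match_scalars <;> field_simp <;> ring_nf <;>
    first
      | rfl
      | (rw [← mul_pow, mul_inv_cancel₀ hd, one_pow])

lemma R_MY_R (hd : (d:ℂ) ≠ 0) : R d * MY d * R d = (d:ℂ)⁻¹ • R d := by
  have h1 : R d * MY d = (d : ℂ)⁻¹ • A2 d - ((d : ℂ) ^ 2)⁻¹ • CC d := by
    simp only [R, sub_mul, smul_mul_assoc, mul_M1_MY, mul_M2_MY]
  rw [h1]
  simp only [R, sub_mul, mul_sub, smul_mul_assoc, Matrix.mul_smul, mul_A2_M1, mul_A2_M2,
    mul_CC_M1, mul_CC_M2, smul_smul, smul_sub]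
  match_scalars <;> field_simp <;> ring_nf <;>
    first
      | rfl
      | (rw [← mul_pow, mul_inv_cancel₀ hd, one_pow])

lemma R_MZ_R (hd : (d:ℂ) ≠ 0) : R d * MZ d * R d = 0 := by
  have h1 : R d * MZ d = (d : ℂ)⁻¹ • A3 d - ((d : ℂ) ^ 2)⁻¹ • M2 d := by
    simp only [R, sub_mul, smul_mul_assoc, mul_M1_MZ, mul_M2_MZ]
  rw [h1]
  simp only [R, sub_mul, mul_sub, smul_mul_assoc, Matrix.mul_smul, mul_A3_M1, mul_A3_M2,
    mul_M2_M1, mul_M2_M2, smul_smul, smul_sub]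
  match_scalars <;> field_simp <;> ring_nf <;>
    first
      | rfl
      | (rw [← mul_pow, mul_inv_cancel₀ hd, one_pow])

lemma bc_val (hd : (d:ℂ) ≠ 0) (i j : SA) : bc d i j = (4:ℂ)⁻¹ * (1 + eps i * (d:ℂ)⁻¹ + eps j * (d:ℂ)⁻¹) := by
  cases i <;> cases j <;> simp only [bc, eps] <;> field_simp <;> ring

lemma R_EE_R (hd : (d:ℂ) ≠ 0) (k l : SA) : R d * EE d k l * R d = bc d k l • R d := by
  rw [EE_eq]
  simp only [mul_add, add_mul, Matrix.mul_smul, smul_mul_assoc, mul_one]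
  rw [R_mul_R d hd]
  have hx := R_MX_R d hd
  have hy := R_MY_R d hd
  have hz := R_MZ_R d hd
  rw [hx, hy, hz, bc_val d hd]
  match_scalars
  ring


lemma Ghat1_mul (hd : (d:ℂ) ≠ 0) (a b i j k l u v : SA) :
    Ghat1 d a b i j * Ghat1 d k l u v
      = (if i = k ∧ j = l then bc d i j else 0) • Ghat1 d a b u v := by
  simp only [Ghat1, Q1_eq d hd]
  by_cases h : i = k ∧ j = l
  · obtain ⟨rfl, rfl⟩ := h
    rw [if_pos ⟨rfl, rfl⟩]
    calc (EE d a b * R d * EE d i j) * (EE d i j * R d * EE d u v)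
        = EE d a b * (R d * (EE d i j * (EE d i j * (R d * EE d u v)))) := by
          simp only [mul_assoc]
      _ = EE d a b * (R d * ((EE d i j * EE d i j) * (R d * EE d u v))) := by
          rw [← mul_assoc (EE d i j) (EE d i j)]
      _ = EE d a b * (R d * (EE d i j * (R d * EE d u v))) := by
          rw [EE_mul]; simp
      _ = EE d a b * ((R d * EE d i j * R d) * EE d u v) := by
          simp only [mul_assoc]
      _ = EE d a b * ((bc d i j • R d) * EE d u v) := by
          rw [R_EE_R d hd]
      _ = bc d i j • (EE d a b * R d * EE d u v) := by
          rw [smul_mul_assoc, mul_smul_comm, mul_assoc]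
  · rw [if_neg h]
    calc (EE d a b * R d * EE d i j) * (EE d k l * R d * EE d u v)
        = EE d a b * (R d * ((EE d i j * EE d k l) * (R d * EE d u v))) := by
          simp only [mul_assoc]
      _ = 0 := by rw [EE_mul]; simp [h]
      _ = (0:ℂ) • (EE d a b * R d * EE d u v) := by simp

end aux2

/-- for `d ≥ 3` all Gram coefficients `b_{ij}` are nonzero, and the
rescaled operators `G^(1)_{[ij][kl]} = b_{ij}⁻¹ Ĝ^(1)_{[ij][kl]}` satisfy the pure
matrix-unit rule `G^(1)_{[ab][ij]} G^(1)_{[kl][pq]} = δ_{ik} δ_{jl} G^(1)_{[ab][pq]}`. -/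
theorem G1_matrix_units (d : ℕ) (hd : 3 ≤ d) :
    (∀ i j : SA, bc d i j ≠ 0) ∧
    (∀ a b i j k l u v : SA,
      G1 d a b i j * G1 d k l u v = if i = k ∧ j = l then G1 d a b u v else 0) := by
  have hd0 : (d:ℂ) ≠ 0 := Nat.cast_ne_zero.mpr (by omega)
  have h2 : (d:ℂ) + 2 ≠ 0 := by
    have h : ((d+2:ℕ):ℂ) ≠ 0 := Nat.cast_ne_zero.mpr (by omega)
    push_cast at h; exact h
  have h3 : (d:ℂ) - 2 ≠ 0 := by
    have h : ((d-2:ℕ):ℂ) ≠ 0 := Nat.cast_ne_zero.mpr (by omega)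
    rw [Nat.cast_sub (by omega : 2 ≤ d)] at h; push_cast at h; exact h
  have h4 : (4:ℂ) * d ≠ 0 := by simp [hd0]
  have hbc : ∀ i j : SA, bc d i j ≠ 0 := by
    intro i j
    cases i <;> cases j <;> simp only [bc] <;>
      first
        | exact div_ne_zero h2 h4
        | exact div_ne_zero h3 h4
        | norm_num
  refine ⟨hbc, ?_⟩
  intro a b i j k l u v
  simp only [G1, smul_mul_assoc, Matrix.mul_smul, Ghat1_mul d hd0, smul_smul]
  by_cases h : i = k ∧ j = l
  · obtain ⟨rfl, rfl⟩ := h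
    rw [if_pos ⟨rfl, rfl⟩, if_pos ⟨rfl, rfl⟩]
    congr 1
    rw [inv_mul_cancel₀ (hbc i j), mul_one]
  · rw [if_neg h, if_neg h]
    simp

end WBA
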